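/- Let $p \ge 3$, and let $\chi_1, \chi_2 : \widehat{\mathbb{Z}} \to \mathbb{Z}_p^\times$ be continuous characters with $\chi_i(1) = (m_i, n_i) \in \mathbb{Z}/(p-1)\mathbb{Z} \times \mathbb{Z}_p$, where $n_1, n_2 \ne 0$. Then $\ker(\chi_2) \subseteq \ker(\chi_1)$ if and only if the subgroup of $\mathbb{Z}/(p-1)\mathbb{Z}$ generated by $m_1$ is contained in the subgroup generated by $m_2$. -/

import Mathlib

open Filter Topology

instance (q : Nat.Primes) : Fact (q : ℕ).Prime := ⟨q.2⟩

/-- `Ẑ = ∏_ℓ ℤ_ℓ`. -/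
def ZHat : Type := Π q : Nat.Primes, ℤ_[(q : ℕ)]

noncomputable instance : CommRing ZHat := by unfold ZHat; infer_instance
noncomputable instance : TopologicalSpace ZHat := by unfold ZHat; infer_instance

/-- The underlying product, with reducible defeq to `ZHat`. -/
abbrev PiHat : Type := Π q : Nat.Primes, ℤ_[(q : ℕ)]

lemma crt_primes (S : Finset Nat.Primes) (N : Nat.Primes → ℕ) (a : Nat.Primes → ℤ) :
    ∃ k : ℤ, ∀ q ∈ S, ((q : ℕ) : ℤ) ^ (N q) ∣ k - a q := by
  classical
  set I : {q // q ∈ S} → Ideal ℤ := fun q => Ideal.span {((q.1 : ℕ) : ℤ) ^ (N q.1)} with hI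
  have hco : Pairwise (Function.onFun IsCoprime I) := by
    intro i j hij
    simp only [hI, Function.onFun, Ideal.isCoprime_span_singleton_iff]
    have hne : ((i.1 : ℕ)) ≠ ((j.1 : ℕ)) := by
      intro h
      exact hij (Subtype.ext ((Nat.Primes.coe_nat_inj _ _).mp h))
    exact IsCoprime.pow (Nat.isCoprime_iff_coprime.mpr
      ((Nat.coprime_primes i.1.2 j.1.2).mpr hne))
  obtain ⟨y, hy⟩ := Ideal.quotientInfToPiQuotient_surj hco
    (fun i => Ideal.Quotient.mk _ (a i.1))
  obtain ⟨k, rfl⟩ := Ideal.Quotient.mk_surjective y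
  refine ⟨k, fun q hq => ?_⟩
  have h2 := congrFun hy ⟨q, hq⟩
  rw [Ideal.quotientInfToPiQuotient_mk', Ideal.Quotient.eq] at h2
  exact Ideal.mem_span_singleton.mp h2

lemma dense_int_pi : DenseRange (fun k : ℤ => ((k : ℤ) : PiHat)) := by
  intro x
  rw [mem_closure_iff_nhds]
  intro U hU
  rw [nhds_pi, Filter.mem_pi] at hU
  obtain ⟨I, hIfin, t, ht, htU⟩ := hU
  classical
  have key : ∀ q : Nat.Primes, ∃ (n : ℕ) (b : ℤ), q ∈ I →
      ∀ y : ℤ_[(q : ℕ)], ((q : ℕ) : ℤ_[(q : ℕ)]) ^ n ∣ y - (b : ℤ_[(q : ℕ)]) → y ∈ t q := by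
    intro q
    by_cases hq : q ∈ I
    · obtain ⟨ε, hε, hball⟩ := Metric.mem_nhds_iff.mp (ht q)
      obtain ⟨n, hn⟩ := exists_pow_lt_of_lt_one hε
        (show (1 : ℝ) / (q : ℕ) < 1 by
          rw [div_lt_one (by exact_mod_cast q.2.pos)]
          exact_mod_cast q.2.one_lt)
      refine ⟨n, (PadicInt.appr (x q) n : ℤ), fun _ y hy => ?_⟩
      apply hball
      have hmem : y - x q ∈ Ideal.span {((q : ℕ) : ℤ_[(q : ℕ)]) ^ n} := by
        have h1 : y - ((PadicInt.appr (x q) n : ℤ) : ℤ_[(q : ℕ)]) ∈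
            Ideal.span {((q : ℕ) : ℤ_[(q : ℕ)]) ^ n} := by
          rw [Ideal.mem_span_singleton]
          exact hy
        have h2 := PadicInt.appr_spec n (x q)
        have h3 : y - x q = (y - ((PadicInt.appr (x q) n : ℤ) : ℤ_[(q : ℕ)])) -
            (x q - (PadicInt.appr (x q) n : ℕ)) := by push_cast; ring
        rw [h3]
        exact Ideal.sub_mem _ h1 h2
      have hnorm : ‖y - x q‖ ≤ ((q : ℕ) : ℝ) ^ (-(n : ℤ)) :=
        (PadicInt.norm_le_pow_iff_mem_span_pow _ _).mpr hmem
      rw [Metric.mem_ball, dist_eq_norm]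
      calc ‖y - x q‖ ≤ ((q : ℕ) : ℝ) ^ (-(n : ℤ)) := hnorm
        _ = ((1 : ℝ) / (q : ℕ)) ^ n := by
            rw [zpow_neg, zpow_natCast, one_div, inv_pow]
        _ < ε := hn
    · exact ⟨0, 0, fun h => absurd h hq⟩
  choose n b hnb using key
  obtain ⟨k, hk⟩ := crt_primes hIfin.toFinset n b
  refine ⟨(k : PiHat), htU ?_, ⟨k, rfl⟩⟩
  intro q hq
  refine hnb q hq _ ?_
  obtain ⟨c, hc⟩ := hk q (hIfin.mem_toFinset.mpr hq)
  refine ⟨(c : ℤ_[(q : ℕ)]), ?_⟩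
  show ((k : ℤ) : ℤ_[(q : ℕ)]) - (b q : ℤ_[(q : ℕ)]) = _
  exact_mod_cast congrArg (fun z : ℤ => (z : ℤ_[(q : ℕ)])) hc

lemma nat_aux1 {g a n : ℕ} (ha : g ∣ a) (hn : g ∣ n) : n ∣ n / g * a := by
  obtain ⟨u, rfl⟩ := ha
  rw [← mul_assoc, Nat.div_mul_cancel hn]
  exact dvd_mul_right n u

lemma nat_aux2 {g n b : ℕ} (hg : 0 < g) (hgn : g ∣ n) (hn : 0 < n)
    (h : n ∣ n / g * b) : g ∣ b := by
  obtain ⟨c, hc⟩ := h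
  have hpos : 0 < n / g := Nat.div_pos (Nat.le_of_dvd hn hgn) hg
  have h2 : n / g * b = n / g * (g * c) := by
    rw [hc, ← mul_assoc, Nat.div_mul_cancel hgn]
  exact ⟨c, Nat.eq_of_mul_eq_mul_left hpos h2⟩

lemma pihat_hom_ext {M : Type} [AddCommGroup M] [TopologicalSpace M] [T2Space M]
    {f g : PiHat →+ M} (hf : Continuous f) (hg : Continuous g) (h : f 1 = g 1) :
    ∀ x, f x = g x := by
  have heq : ⇑f = ⇑g := by
    refine DenseRange.equalizer dense_int_pi hf hg (funext fun k => ?_)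
    show f (k : PiHat) = g (k : PiHat)
    have h1 : ((k : ℤ) : PiHat) = k • (1 : PiHat) := (zsmul_one k).symm
    rw [h1, map_zsmul, map_zsmul, h]
  exact fun x => congrFun heq x

theorem stmt_4_aux (p : ℕ) [hp : Fact p.Prime] (hp3 : 3 ≤ p)
    (χ₁ χ₂ : PiHat →+ ZMod (p - 1) × ℤ_[p]) (hχ₁ : Continuous χ₁) (hχ₂ : Continuous χ₂)
    (m₁ m₂ : ZMod (p - 1)) (n₁ n₂ : ℤ_[p]) (hn₁ : n₁ ≠ 0) (hn₂ : n₂ ≠ 0)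
    (hval₁ : χ₁ 1 = (m₁, n₁)) (hval₂ : χ₂ 1 = (m₂, n₂)) :
    (∀ x : PiHat, χ₂ x = 0 → χ₁ x = 0) ↔
      AddSubgroup.zmultiples m₁ ≤ AddSubgroup.zmultiples m₂ := by
  classical
  haveI : NeZero (p - 1) := ⟨by omega⟩
  set p' : Nat.Primes := ⟨p, hp.out⟩ with hp'
  -- structure of the second component
  have hsnd : ∀ (χ : PiHat →+ ZMod (p - 1) × ℤ_[p]), Continuous χ →
      ∀ x : PiHat, (χ x).2 = x p' * (χ 1).2 := by
    intro χ hχ x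
    let D : PiHat →+ ℤ_[p] :=
      { toFun := fun y => y p' * (χ 1).2
        map_zero' := zero_mul _
        map_add' := fun a b => add_mul (a p') (b p') _ }
    have hcontD : Continuous D := (continuous_apply p').mul continuous_const
    have h1 : ((AddMonoidHom.snd (ZMod (p - 1)) ℤ_[p]).comp χ) 1 = D 1 := by
      show (χ 1).2 = (1 : PiHat) p' * (χ 1).2
      exact (one_mul _).symm
    exact pihat_hom_ext (continuous_snd.comp hχ) hcontD h1 x
  constructor
  · -- forward direction
    intro hker
    rw [AddSubgroup.zmultiples_le]
    -- the idempotent at p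
    set ep : PiHat := Pi.single p' 1 with hep
    have hep_p : ep p' = 1 := Pi.single_eq_same p' 1
    -- first component of χ at ep vanishes
    have hfst_ep : ∀ (χ : PiHat →+ ZMod (p - 1) × ℤ_[p]), Continuous χ → (χ ep).1 = 0 := by
      intro χ hχ
      have htend : Tendsto (fun k : ℕ => (p ^ k) • ep) atTop (𝓝 0) := by
        rw [tendsto_pi_nhds]
        intro q
        by_cases hq : q = p'
        · subst hq
          have hcomp : ∀ k : ℕ, ((p ^ k) • ep) p' = ((p : ℤ_[p]) : ℤ_[(p' : ℕ)]) ^ k := by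
            intro k
            show (p ^ k) • (ep p') = _
            rw [hep_p, nsmul_eq_mul, mul_one]
            push_cast
            rfl
          simp only [hcomp, Pi.zero_apply]
          apply tendsto_pow_atTop_nhds_zero_of_norm_lt_one
          show ‖(p : ℤ_[p])‖ < 1
          rw [PadicInt.norm_p]
          rw [inv_lt_one_iff₀]
          right
          exact_mod_cast hp.out.one_lt
        · have hcomp : ∀ k : ℕ, ((p ^ k) • ep) q = 0 := by
            intro k
            show (p ^ k) • (ep q) = 0
            rw [hep, Pi.single_eq_of_ne hq, smul_zero]
          simp only [hcomp, Pi.zero_apply]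
          exact tendsto_const_nhds
      have htend2 : Tendsto (fun k : ℕ => (p ^ k) • (χ ep).1) atTop (𝓝 0) := by
        have hA := (hχ.tendsto 0).comp htend
        rw [map_zero] at hA
        have hB := (continuous_fst.tendsto (0 : ZMod (p - 1) × ℤ_[p])).comp hA
        simp only [Function.comp_def, Prod.fst_zero] at hB
        have hC : (fun k : ℕ => (χ ((p ^ k) • ep)).1) = fun k : ℕ => (p ^ k) • (χ ep).1 := by
          funext k; rw [map_nsmul]; rfl
        rwa [hC] at hB
      rw [nhds_discrete, Filter.tendsto_pure] at htend2
      obtain ⟨k, hk⟩ := htend2.exists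
      have hcop : Nat.Coprime (p ^ k) (p - 1) := by
        apply Nat.Coprime.pow_left
        rw [hp.out.coprime_iff_not_dvd]
        intro hdvd
        have := Nat.le_of_dvd (by omega) hdvd
        omega
      have hNc : (p - 1) • (χ ep).1 = 0 := by
        rw [nsmul_eq_mul, ZMod.natCast_self, zero_mul]
      have hbez := Nat.gcd_eq_gcd_ab (p ^ k) (p - 1)
      rw [hcop.gcd_eq_one, Nat.cast_one] at hbez
      have hone' : ((p ^ k : ℕ) : ℤ) * Nat.gcdA (p ^ k) (p - 1) +
          ((p - 1 : ℕ) : ℤ) * Nat.gcdB (p ^ k) (p - 1) = 1 := by linear_combination -hbez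
      have h1 : ((p ^ k : ℕ) : ℤ) • (χ ep).1 = 0 := by rw [natCast_zsmul]; exact hk
      have h2 : (((p - 1 : ℕ)) : ℤ) • (χ ep).1 = 0 := by rw [natCast_zsmul]; exact hNc
      have h3 : (((p ^ k : ℕ) : ℤ) * Nat.gcdA (p ^ k) (p - 1) +
          ((p - 1 : ℕ) : ℤ) * Nat.gcdB (p ^ k) (p - 1)) • (χ ep).1 = (χ ep).1 := by
        rw [hone', one_smul]
      rw [add_smul, mul_comm (((p ^ k : ℕ) : ℤ)) (Nat.gcdA (p ^ k) (p - 1)),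
        mul_comm ((((p - 1 : ℕ)) : ℤ)) (Nat.gcdB (p ^ k) (p - 1)), mul_smul, mul_smul,
        h1, h2, smul_zero, smul_zero, add_zero] at h3
      exact h3.symm
    -- the second component of χ at ep is (χ 1).2
    have hsnd_ep : ∀ (χ : PiHat →+ ZMod (p - 1) × ℤ_[p]), Continuous χ →
        (χ ep).2 = (χ 1).2 := by
      intro χ hχ
      rw [hsnd χ hχ ep, hep_p, one_mul]
    -- annihilator condition
    have hann : ∀ a : ℤ, a • m₂ = 0 → a • m₁ = 0 := by
      intro a ha
      set x : PiHat := a • (1 : PiHat) - a • ep with hx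
      have hχ₂x : χ₂ x = 0 := by
        rw [hx, map_sub, map_zsmul, map_zsmul, hval₂]
        have he : χ₂ ep = (0, n₂) := by
          have h1 := hfst_ep χ₂ hχ₂
          have h2 := hsnd_ep χ₂ hχ₂
          rw [hval₂] at h2
          exact Prod.ext h1 h2
        rw [he, Prod.smul_mk, Prod.smul_mk, Prod.mk_sub_mk, smul_zero, sub_zero, sub_self, ha]
        rfl
      have hχ₁x := hker x hχ₂x
      have : (χ₁ x).1 = 0 := by rw [hχ₁x]; rfl
      rw [hx, map_sub, map_zsmul, map_zsmul, hval₁] at this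
      have h1 := hfst_ep χ₁ hχ₁
      have hfstval : (a • ((m₁ : ZMod (p - 1)), n₁) - a • χ₁ ep).1 = a • m₁ - a • (χ₁ ep).1 :=
        rfl
      rw [hfstval, h1, smul_zero, sub_zero] at this
      exact this
    -- conclude membership using gcd/Bezout
    have hg : Nat.gcd (m₂.val) (p - 1) = Nat.gcd (m₂.val) (p - 1) := rfl
    have hNpos : 0 < p - 1 := by omega
    have hgdvdN : Nat.gcd (m₂.val) (p - 1) ∣ (p - 1) := Nat.gcd_dvd_right _ _
    have hgdvdm₂ : Nat.gcd (m₂.val) (p - 1) ∣ m₂.val := Nat.gcd_dvd_left _ _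
    have hgpos : 0 < Nat.gcd (m₂.val) (p - 1) := Nat.gcd_pos_of_pos_right _ hNpos
    have ha2 : (((p - 1) / Nat.gcd (m₂.val) (p - 1) : ℕ) : ℤ) • m₂ = 0 := by
      rw [natCast_zsmul]
      have : ((p - 1) / Nat.gcd (m₂.val) (p - 1)) • m₂ = ((((p - 1) / Nat.gcd (m₂.val) (p - 1)) * m₂.val : ℕ) : ZMod (p - 1)) := by
        rw [Nat.cast_mul, ZMod.natCast_zmod_val, nsmul_eq_mul]
      rw [this, ZMod.natCast_eq_zero_iff]
      exact nat_aux1 hgdvdm₂ hgdvdN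
    have ha1 := hann _ ha2
    have hgdvdm₁ : Nat.gcd (m₂.val) (p - 1) ∣ m₁.val := by
      rw [natCast_zsmul] at ha1
      have h1 : ((p - 1) / Nat.gcd (m₂.val) (p - 1)) • m₁ = ((((p - 1) / Nat.gcd (m₂.val) (p - 1)) * m₁.val : ℕ) : ZMod (p - 1)) := by
        rw [Nat.cast_mul, ZMod.natCast_zmod_val, nsmul_eq_mul]
      rw [h1, ZMod.natCast_eq_zero_iff] at ha1
      exact nat_aux2 hgpos hgdvdN hNpos ha1
    -- Bezout: (g : ZMod (p - 1)) = gcdA * m₂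
    have hbez : ((Nat.gcd (m₂.val) (p - 1) : ℕ) : ZMod (p - 1)) = ((Nat.gcdA (m₂.val) (p - 1) : ℤ) : ZMod (p - 1)) * m₂ := by
      have h := Nat.gcd_eq_gcd_ab (m₂.val) (p - 1)
      have h2 := congrArg (fun z : ℤ => (z : ZMod (p - 1))) h
      push_cast at h2
      rw [ZMod.natCast_self] at h2
      rw [ZMod.natCast_zmod_val] at h2
      simpa [mul_comm] using h2
    rw [AddSubgroup.mem_zmultiples_iff]
    refine ⟨((m₁.val / Nat.gcd (m₂.val) (p - 1) : ℕ) : ℤ) * Nat.gcdA (m₂.val) (p - 1), ?_⟩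
    rw [mul_smul]
    have e1 : (Nat.gcdA (m₂.val) (p - 1)) • m₂ =
        ((Nat.gcd (m₂.val) (p - 1) : ℕ) : ZMod (p - 1)) := by
      rw [zsmul_eq_mul, ← hbez]
    rw [e1, natCast_zsmul, nsmul_eq_mul, ← Nat.cast_mul, Nat.div_mul_cancel hgdvdm₁,
      ZMod.natCast_zmod_val]
  · -- converse direction
    intro hle x hx
    obtain ⟨t, ht⟩ := AddSubgroup.mem_zmultiples_iff.mp (hle (AddSubgroup.mem_zmultiples m₁))
    have hx2 : (χ₂ x).2 = 0 := by rw [hx]; rfl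
    have hxp : x p' = 0 := by
      have h := hsnd χ₂ hχ₂ x
      rw [hval₂] at h
      rw [h] at hx2
      rcases mul_eq_zero.mp hx2 with h' | h'
      · exact h'
      · exact absurd h' hn₂
    have h2 : (χ₁ x).2 = 0 := by
      rw [hsnd χ₁ hχ₁ x, hxp, zero_mul]
    have h1 : (χ₁ x).1 = 0 := by
      -- fst ∘ χ₁ = t • (fst ∘ χ₂)
      have key : ∀ y : PiHat, (χ₁ y).1 = t • (χ₂ y).1 := by
        intro y
        have hcont1 : Continuous ((AddMonoidHom.fst (ZMod (p - 1)) ℤ_[p]).comp χ₁) :=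
          continuous_fst.comp hχ₁
        have hcont2 : Continuous ((DistribMulAction.toAddMonoidHom (ZMod (p - 1)) t).comp
            ((AddMonoidHom.fst (ZMod (p - 1)) ℤ_[p]).comp χ₂)) := by
          show Continuous fun y : PiHat => t • (χ₂ y).1
          exact Continuous.comp
            (continuous_of_discreteTopology (f := fun z : ZMod (p - 1) => t • z))
            (continuous_fst.comp hχ₂)
        have hone : ((AddMonoidHom.fst (ZMod (p - 1)) ℤ_[p]).comp χ₁) 1 =
            ((DistribMulAction.toAddMonoidHom (ZMod (p - 1)) t).comp
              ((AddMonoidHom.fst (ZMod (p - 1)) ℤ_[p]).comp χ₂)) 1 := by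
          show (χ₁ 1).1 = t • (χ₂ 1).1
          rw [hval₁, hval₂]
          exact ht.symm
        exact pihat_hom_ext hcont1 hcont2 hone y
      rw [key x, hx]
      simp
    have : χ₁ x = ((χ₁ x).1, (χ₁ x).2) := rfl
    rw [this, h1, h2]
    rfl

/-- For `p ≥ 3` and continuous characters `χᵢ : Ẑ → ℤ/(p-1) × ℤ_p` (the target being
`ℤ_pˣ` under the canonical isomorphism) with `χᵢ(1) = (mᵢ, nᵢ)`, `nᵢ ≠ 0`, one has
`ker χ₂ ⊆ ker χ₁` iff `⟨m₁⟩ ⊆ ⟨m₂⟩` in `ℤ/(p-1)`. -/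
theorem stmt_4 (p : ℕ) [hp : Fact p.Prime] (hp3 : 3 ≤ p)
    (χ₁ χ₂ : ZHat →+ ZMod (p - 1) × ℤ_[p]) (hχ₁ : Continuous χ₁) (hχ₂ : Continuous χ₂)
    (m₁ m₂ : ZMod (p - 1)) (n₁ n₂ : ℤ_[p]) (hn₁ : n₁ ≠ 0) (hn₂ : n₂ ≠ 0)
    (hval₁ : χ₁ 1 = (m₁, n₁)) (hval₂ : χ₂ 1 = (m₂, n₂)) :
    (∀ x : ZHat, χ₂ x = 0 → χ₁ x = 0) ↔
      AddSubgroup.zmultiples m₁ ≤ AddSubgroup.zmultiples m₂ := by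
  exact stmt_4_aux p hp3 χ₁ χ₂ hχ₁ hχ₂ m₁ m₂ n₁ n₂ hn₁ hn₂ hval₁ hval₂
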